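/- Let H = [[M, F],[Fᵀ, 0]] be a real symmetric block matrix where M is n×n symmetric positive definite and F is n×m of full column rank (m < n). Let α = λ_min(M), β = λ_max(M), σ₁ = σ_min(F), σ₂ = σ_max(F) (extreme singular values). Then every eigenvalue λ of H satisfies λ ∈ [(α - √(α² + 4σ₂²))/2, (β - √(β² + 4σ₁²))/2] ∪ [α, (β + √(β² + 4σ₂²))/2]. -/

import Mathlib

open Matrix


lemma herm_decomp {k : ℕ} (S : Matrix (Fin k) (Fin k) ℝ) (hS : S.IsHermitian) (x : Fin k → ℝ) :
    ∃ c : Fin k → ℝ,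
      x ⬝ᵥ x = ∑ i, c i ^ 2 ∧
      x ⬝ᵥ (S *ᵥ x) = ∑ i, hS.eigenvalues i * c i ^ 2 ∧
      (S *ᵥ x) ⬝ᵥ (S *ᵥ x) = ∑ i, hS.eigenvalues i ^ 2 * c i ^ 2 := by
  set U : Matrix (Fin k) (Fin k) ℝ := (hS.eigenvectorUnitary : Matrix (Fin k) (Fin k) ℝ) with hUdef
  have hU1 : U * star U = 1 := (Matrix.mem_unitaryGroup_iff).mp hS.eigenvectorUnitary.2
  have hU2 : star U * U = 1 := (Matrix.mem_unitaryGroup_iff').mp hS.eigenvectorUnitary.2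
  set c : Fin k → ℝ := star U *ᵥ x with hc
  have hstar : star U = Uᵀ := by
    rw [Matrix.star_eq_conjTranspose, Matrix.conjTranspose_eq_transpose_of_trivial]
  have hx : U *ᵥ c = x := by
    rw [hc, Matrix.mulVec_mulVec, hU1, Matrix.one_mulVec]
  have hspec : S = U * Matrix.diagonal hS.eigenvalues * star U := by
    have := hS.spectral_theorem
    simpa using this
  have hUU : ∀ w w' : Fin k → ℝ, (U *ᵥ w) ⬝ᵥ (U *ᵥ w') = w ⬝ᵥ w' := by
    intro w w'
    rw [Matrix.dotProduct_mulVec, ← Matrix.mulVec_transpose, Matrix.mulVec_mulVec, ← hstar, hU2,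
      Matrix.one_mulVec]
  have hSx : S *ᵥ x = U *ᵥ (Matrix.diagonal hS.eigenvalues *ᵥ c) := by
    conv_lhs => rw [hspec]
    rw [← Matrix.mulVec_mulVec, ← Matrix.mulVec_mulVec]
  refine ⟨c, ?_, ?_, ?_⟩
  · rw [← hx, hUU]
    exact Finset.sum_congr rfl fun i _ => by ring
  · rw [hSx, ← hx, hUU]
    simp only [dotProduct, Matrix.mulVec_diagonal]
    exact Finset.sum_congr rfl fun i _ => by ring
  · rw [hSx, hUU]
    simp only [dotProduct, Matrix.mulVec_diagonal]
    exact Finset.sum_congr rfl fun i _ => by ring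

lemma inf_quad_le {k : ℕ} (S : Matrix (Fin k) (Fin k) ℝ) (hS : S.IsHermitian) (x : Fin k → ℝ) :
    (⨅ i, hS.eigenvalues i) * (x ⬝ᵥ x) ≤ x ⬝ᵥ (S *ᵥ x) := by
  obtain ⟨c, h1, h2, _⟩ := herm_decomp S hS x
  rw [h1, h2, Finset.mul_sum]
  exact Finset.sum_le_sum fun i _ => mul_le_mul_of_nonneg_right
    (ciInf_le (Set.Finite.bddBelow (Set.finite_range _)) i) (sq_nonneg _)

lemma quad_le_sup {k : ℕ} (S : Matrix (Fin k) (Fin k) ℝ) (hS : S.IsHermitian) (x : Fin k → ℝ) :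
    x ⬝ᵥ (S *ᵥ x) ≤ (⨆ i, hS.eigenvalues i) * (x ⬝ᵥ x) := by
  obtain ⟨c, h1, h2, _⟩ := herm_decomp S hS x
  rw [h1, h2, Finset.mul_sum]
  exact Finset.sum_le_sum fun i _ => mul_le_mul_of_nonneg_right
    (le_ciSup (Set.Finite.bddAbove (Set.finite_range _)) i) (sq_nonneg _)

lemma sq_quad_le {k : ℕ} (S : Matrix (Fin k) (Fin k) ℝ) (hS : S.IsHermitian) (x : Fin k → ℝ)
    (h0 : ∀ i, 0 ≤ hS.eigenvalues i) :
    (S *ᵥ x) ⬝ᵥ (S *ᵥ x) ≤ (⨆ i, hS.eigenvalues i) * (x ⬝ᵥ (S *ᵥ x)) := by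
  obtain ⟨c, _, h2, h3⟩ := herm_decomp S hS x
  rw [h2, h3, Finset.mul_sum]
  refine Finset.sum_le_sum fun i _ => ?_
  have hsup : hS.eigenvalues i ≤ ⨆ j, hS.eigenvalues j :=
    le_ciSup (Set.Finite.bddAbove (Set.finite_range _)) i
  have := mul_le_mul_of_nonneg_right hsup (mul_nonneg (h0 i) (sq_nonneg (c i)))
  nlinarith [this]

lemma key_sqrt_le (a t lam : ℝ) (h : (2 * lam - a) ^ 2 ≤ a ^ 2 + t) :
    lam ≤ (a + Real.sqrt (a ^ 2 + t)) / 2 := by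
  have h1 : 2 * lam - a ≤ Real.sqrt (a ^ 2 + t) :=
    le_trans (le_abs_self _) (by rw [← Real.sqrt_sq_eq_abs]; exact Real.sqrt_le_sqrt h)
  linarith

lemma key_sqrt_ge (a t lam : ℝ) (h : (a - 2 * lam) ^ 2 ≤ a ^ 2 + t) :
    (a - Real.sqrt (a ^ 2 + t)) / 2 ≤ lam := by
  have h1 : a - 2 * lam ≤ Real.sqrt (a ^ 2 + t) :=
    le_trans (le_abs_self _) (by rw [← Real.sqrt_sq_eq_abs]; exact Real.sqrt_le_sqrt h)
  linarith

lemma key_sqrt_le' (a t lam : ℝ) (hpos : 0 ≤ a - 2 * lam) (h : a ^ 2 + t ≤ (a - 2 * lam) ^ 2) :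
    lam ≤ (a - Real.sqrt (a ^ 2 + t)) / 2 := by
  have h1 : Real.sqrt (a ^ 2 + t) ≤ a - 2 * lam := by
    rw [← Real.sqrt_sq hpos]; exact Real.sqrt_le_sqrt h
  linarith

lemma dp_self_nonneg {k : ℕ} (x : Fin k → ℝ) : 0 ≤ x ⬝ᵥ x :=
  Finset.sum_nonneg fun i _ => mul_self_nonneg _

lemma dp_self_pos {k : ℕ} {x : Fin k → ℝ} (hx : x ≠ 0) : 0 < x ⬝ᵥ x :=
  lt_of_le_of_ne (dp_self_nonneg x) fun h => hx (dotProduct_self_eq_zero.mp h.symm)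

lemma key_sqrt_ge2 (a s lam : ℝ) (h : lam ^ 2 ≤ a * lam + s) :
    (a - Real.sqrt (a ^ 2 + 4 * s)) / 2 ≤ lam :=
  key_sqrt_ge a (4 * s) lam (by nlinarith)

lemma key_sqrt_le2 (a s lam : ℝ) (h : lam ^ 2 ≤ a * lam + s) :
    lam ≤ (a + Real.sqrt (a ^ 2 + 4 * s)) / 2 :=
  key_sqrt_le a (4 * s) lam (by nlinarith)

lemma key_sqrt_le3 (a s lam : ℝ) (hlam : lam < 0) (ha : 0 < a) (h : s ≤ lam ^ 2 - a * lam) :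
    lam ≤ (a - Real.sqrt (a ^ 2 + 4 * s)) / 2 :=
  key_sqrt_le' a (4 * s) lam (by linarith) (by nlinarith)

lemma aux_quad_pos (b σ lam px py qx tw : ℝ) (h : 0 < lam) (hpx : 0 < px)
    (bb : qx ≤ b * px) (hq : qx + lam * py = lam * px) (hww : tw = lam ^ 2 * py)
    (bσw : tw ≤ σ ^ 2 * px) : lam ^ 2 ≤ b * lam + σ ^ 2 := by
  have h1 : lam * qx ≤ lam * (b * px) := mul_le_mul_of_nonneg_left bb h.le
  have h2 : lam * (qx + lam * py) = lam * (lam * px) := by rw [hq]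
  nlinarith [h1, h2, bσw, hww]

lemma aux_quad_neg (a σ lam px py qx tw : ℝ) (h : lam < 0) (hpx : 0 < px)
    (ba : a * px ≤ qx) (hq : qx + lam * py = lam * px) (hww : tw = lam ^ 2 * py)
    (bσw : tw ≤ σ ^ 2 * px) : lam ^ 2 ≤ a * lam + σ ^ 2 := by
  have h1 : lam * qx ≤ lam * (a * px) := mul_le_mul_of_nonpos_left ba h.le
  have h2 : lam * (qx + lam * py) = lam * (lam * px) := by rw [hq]
  nlinarith [h1, h2, bσw, hww]

lemma aux_pos_lower (a lam px py qx : ℝ) (h : 0 < lam) (hpx : 0 < px) (hpy : 0 ≤ py)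
    (ba : a * px ≤ qx) (hq : qx + lam * py = lam * px) : a ≤ lam := by
  nlinarith [mul_nonneg h.le hpy]

lemma aux_neg_upper (b σ lam px py qx rx gy : ℝ) (hneg : lam < 0) (hpy : 0 < py)
    (bb : qx ≤ b * px) (bM2 : rx ≤ b * qx) (hq : qx + lam * py = lam * px)
    (gy_eq : gy = lam ^ 2 * px - 2 * lam * qx + rx) (bσ : σ ^ 2 * py ≤ gy) :
    σ ^ 2 ≤ lam ^ 2 - b * lam := by
  have t1 : lam * (b * px - qx) ≤ 0 :=
    mul_nonpos_of_nonpos_of_nonneg hneg.le (by linarith)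
  have step : gy ≤ (lam - b) * (lam * px - qx) := by nlinarith [t1]
  have hlampy : lam * px - qx = lam * py := by linarith
  have key : σ ^ 2 * py ≤ (lam ^ 2 - b * lam) * py := by
    rw [hlampy] at step
    nlinarith [step]
  exact le_of_mul_le_mul_right key hpy

lemma aux_zero_mem (a b σ : ℝ) (ha : 0 < a) (hb : 0 < b) :
    (a - Real.sqrt (a ^ 2 + 4 * σ ^ 2)) / 2 ≤ 0 ∧
      (0 : ℝ) ≤ (b - Real.sqrt (b ^ 2 + 4 * 0 ^ 2)) / 2 := by
  constructor
  · have h1 := Real.sqrt_le_sqrt (show a ^ 2 ≤ a ^ 2 + 4 * σ ^ 2 by nlinarith [sq_nonneg σ])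
    rw [Real.sqrt_sq ha.le] at h1
    linarith
  · have h2 : Real.sqrt (b ^ 2 + 4 * 0 ^ 2) = b := by
      rw [(by ring : b ^ 2 + 4 * 0 ^ 2 = b ^ 2), Real.sqrt_sq hb.le]
    rw [h2]
    linarith

/-- Rusten–Winther type eigenvalue inclusion for the symmetric saddle-point matrix
`H = [[M, F],[Fᵀ, 0]]`. -/
theorem symmetric_saddle_point_eigenvalue_bounds
    (n m : ℕ) (hmn : m < n)
    (M : Matrix (Fin n) (Fin n) ℝ) (hM : M.PosDef)
    (F : Matrix (Fin n) (Fin m) ℝ) (hF : F.rank = m)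
    (α β σ₁ σ₂ : ℝ)
    (hα : α = ⨅ i, hM.1.eigenvalues i)
    (hβ : β = ⨆ i, hM.1.eigenvalues i)
    (hσ₁ : 0 ≤ σ₁ ∧ σ₁ ^ 2 = ⨅ i, (Matrix.isHermitian_iff_isSymm.mpr (Matrix.transpose_mul Fᵀ F) : (Fᵀ * F).IsHermitian).eigenvalues i)
    (hσ₂ : 0 ≤ σ₂ ∧ σ₂ ^ 2 = ⨆ i, (Matrix.isHermitian_iff_isSymm.mpr (Matrix.transpose_mul Fᵀ F) : (Fᵀ * F).IsHermitian).eigenvalues i)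
    (H : Matrix (Fin n ⊕ Fin m) (Fin n ⊕ Fin m) ℝ)
    (hH : H = Matrix.fromBlocks M F Fᵀ 0) :
    ∀ lam : ℝ, (∃ v : Fin n ⊕ Fin m → ℝ, v ≠ 0 ∧ H *ᵥ v = lam • v) →
      lam ∈ Set.Icc ((α - Real.sqrt (α ^ 2 + 4 * σ₂ ^ 2)) / 2)
                    ((β - Real.sqrt (β ^ 2 + 4 * σ₁ ^ 2)) / 2) ∪
          Set.Icc α ((β + Real.sqrt (β ^ 2 + 4 * σ₂ ^ 2)) / 2) := by
  intro lam ⟨v, hv0, hvE⟩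
  -- components
  obtain ⟨x, hxdef⟩ : ∃ x : Fin n → ℝ, x = v ∘ Sum.inl := ⟨_, rfl⟩
  obtain ⟨y, hydef⟩ : ∃ y : Fin m → ℝ, y = v ∘ Sum.inr := ⟨_, rfl⟩
  have hv : v = Sum.elim x y := by rw [hxdef, hydef]; exact (Sum.elim_comp_inl_inr v).symm
  rw [hH, hv, Matrix.fromBlocks_mulVec] at hvE
  have e1 : M *ᵥ x + F *ᵥ y = lam • x := by
    funext i; simpa using congrFun hvE (Sum.inl i)
  have e2 : Fᵀ *ᵥ x = lam • y := by
    funext i; simpa using congrFun hvE (Sum.inr i)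
  have hxy : x ≠ 0 ∨ y ≠ 0 := by
    by_contra h
    push_neg at h
    exact hv0 (by rw [hv, h.1, h.2]; funext i; cases i <;> rfl)
  -- scalar quantities (opaque)
  obtain ⟨px, hpx⟩ : ∃ p : ℝ, p = x ⬝ᵥ x := ⟨_, rfl⟩
  obtain ⟨py, hpy⟩ : ∃ p : ℝ, p = y ⬝ᵥ y := ⟨_, rfl⟩
  obtain ⟨qx, hqx⟩ : ∃ q : ℝ, q = x ⬝ᵥ (M *ᵥ x) := ⟨_, rfl⟩
  obtain ⟨rx, hrx⟩ : ∃ r : ℝ, r = (M *ᵥ x) ⬝ᵥ (M *ᵥ x) := ⟨_, rfl⟩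
  obtain ⟨tw, htw⟩ : ∃ t : ℝ, t = (Fᵀ *ᵥ x) ⬝ᵥ (Fᵀ *ᵥ x) := ⟨_, rfl⟩
  obtain ⟨gy, hgy⟩ : ∃ g : ℝ, g = (F *ᵥ y) ⬝ᵥ (F *ᵥ y) := ⟨_, rfl⟩
  have hpx0 : 0 ≤ px := hpx ▸ dp_self_nonneg x
  have hpy0 : 0 ≤ py := hpy ▸ dp_self_nonneg y
  -- basic spectral bounds for M
  have bα : α * px ≤ qx := by rw [hα, hpx, hqx]; exact inf_quad_le M hM.1 x
  have bβ : qx ≤ β * px := by rw [hβ, hpx, hqx]; exact quad_le_sup M hM.1 x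
  have bM2 : rx ≤ β * qx := by
    rw [hβ, hrx, hqx]; exact sq_quad_le M hM.1 x fun i => (hM.eigenvalues_pos i).le
  -- α positive, β ≥ α
  have hn : Nonempty (Fin n) := ⟨⟨0, Nat.lt_of_le_of_lt (Nat.zero_le m) hmn⟩⟩
  have hα0 : 0 < α := by
    have hmem : sInf (Set.range hM.1.eigenvalues) ∈ Set.range hM.1.eigenvalues :=
      Set.Nonempty.csInf_mem (Set.range_nonempty _) (Set.finite_range _)
    obtain ⟨i, hi⟩ := hmem
    rw [hα, iInf, ← hi]
    exact hM.eigenvalues_pos i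
  have hαβ : α ≤ β := by
    obtain ⟨i⟩ := hn
    exact le_trans (hα ▸ ciInf_le (Set.Finite.bddBelow (Set.finite_range _)) i)
      (hβ ▸ le_ciSup (Set.Finite.bddAbove (Set.finite_range _)) i)
  have hβ0 : 0 < β := lt_of_lt_of_le hα0 hαβ
  -- quadratic form bounds involving F
  have hGy : ∀ z : Fin m → ℝ, z ⬝ᵥ ((Fᴴ * F) *ᵥ z) = (F *ᵥ z) ⬝ᵥ (F *ᵥ z) := by
    intro z
    rw [← Matrix.mulVec_mulVec, Matrix.dotProduct_mulVec,
      Matrix.conjTranspose_eq_transpose_of_trivial, ← Matrix.mulVec_transpose,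
      Matrix.transpose_transpose]
  have bσ₁ : σ₁ ^ 2 * py ≤ gy := by
    rw [hpy, hgy, ← hGy, hσ₁.2]
    exact inf_quad_le _ (Matrix.isHermitian_conjTranspose_mul_self F) y
  have bσ₂F : ∀ z : Fin m → ℝ, (F *ᵥ z) ⬝ᵥ (F *ᵥ z) ≤ σ₂ ^ 2 * (z ⬝ᵥ z) := by
    intro z
    rw [← hGy, hσ₂.2]
    exact quad_le_sup _ (Matrix.isHermitian_conjTranspose_mul_self F) z
  -- Cauchy–Schwarz bound:  |Fᵀx|² ≤ σ₂² px
  have bσw : tw ≤ σ₂ ^ 2 * px := by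
    have ht : 0 ≤ tw := htw ▸ dp_self_nonneg _
    rcases eq_or_lt_of_le ht with h0 | hpos
    · rw [← h0]
      exact mul_nonneg (sq_nonneg _) hpx0
    · have h1 : tw = (F *ᵥ (Fᵀ *ᵥ x)) ⬝ᵥ x := by
        rw [htw]
        conv_lhs => rw [Matrix.dotProduct_mulVec, ← Matrix.mulVec_transpose,
          Matrix.transpose_transpose]
      have h2 : ((F *ᵥ (Fᵀ *ᵥ x)) ⬝ᵥ x) ^ 2 ≤ ((F *ᵥ (Fᵀ *ᵥ x)) ⬝ᵥ (F *ᵥ (Fᵀ *ᵥ x))) * px := by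
        rw [hpx]
        simpa [dotProduct, pow_two] using
          Finset.sum_mul_sq_le_sq_mul_sq Finset.univ (F *ᵥ (Fᵀ *ᵥ x)) x
      have h3 := bσ₂F (Fᵀ *ᵥ x)
      rw [← htw] at h3
      have h4 : tw * tw ≤ (σ₂ ^ 2 * px) * tw := by nlinarith [h1, h2, h3, hpx0]
      exact le_of_mul_le_mul_right h4 hpos
  -- key scalar identities
  have hxFy : x ⬝ᵥ (F *ᵥ y) = lam * py := by
    rw [Matrix.dotProduct_mulVec, ← Matrix.mulVec_transpose, e2, hpy]
    simp [smul_dotProduct]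
  have hq : qx + lam * py = lam * px := by
    have h := congrArg (fun z => x ⬝ᵥ z) e1
    simp only [dotProduct_add, dotProduct_smul, smul_eq_mul] at h
    rw [hxFy] at h
    rw [hqx, hpx]
    exact h
  have hww : tw = lam ^ 2 * py := by
    rw [htw, e2, hpy]
    simp [smul_dotProduct, dotProduct_smul]
    ring
  -- trichotomy
  rcases lt_trichotomy lam 0 with hneg | hzero | hposl
  · -- negative eigenvalue: left interval
    left
    have hxne : x ≠ 0 := by
      intro hx0
      rcases hxy with h | h
      · exact h hx0
      · apply h
        have h' : lam • y = 0 := by rw [← e2, hx0, Matrix.mulVec_zero]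
        rcases smul_eq_zero.mp h' with h'' | h''
        · exact absurd h'' hneg.ne
        · exact h''
    have hpxpos : 0 < px := hpx ▸ dp_self_pos hxne
    have hyne : y ≠ 0 := by
      intro hy0
      have hpy0' : py = 0 := by rw [hpy, hy0]; simp
      have hqlam : qx = lam * px := by rw [← hq, hpy0']; ring
      have h5 := mul_pos hα0 hpxpos
      have h6 := mul_neg_of_neg_of_pos hneg hpxpos
      linarith only [bα, hqlam, h5, h6]
    have hpypos : 0 < py := hpy ▸ dp_self_pos hyne
    constructor
    · exact key_sqrt_ge2 α (σ₂ ^ 2) lam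
        (aux_quad_neg α σ₂ lam px py qx tw hneg hpxpos bα hq hww bσw)
    · -- upper bound
      have hFy : F *ᵥ y = lam • x - M *ᵥ x := by
        rw [← e1]; funext i; simp
      have gy_eq : gy = lam ^ 2 * px - 2 * lam * qx + rx := by
        rw [hgy, hFy]
        simp only [sub_dotProduct, dotProduct_sub, smul_dotProduct,
          dotProduct_smul, smul_eq_mul]
        rw [dotProduct_comm (M *ᵥ x) x]
        rw [← hpx, ← hqx, ← hrx]
        ring
      exact key_sqrt_le3 β (σ₁ ^ 2) lam hneg hβ0
        (aux_neg_upper β σ₁ lam px py qx rx gy hneg hpypos bβ bM2 hq gy_eq bσ₁)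
  · -- zero eigenvalue: left interval
    left
    subst hzero
    have hqx0 : qx = 0 := by linarith only [hq]
    have hx0 : x = 0 := by
      by_contra hxne
      have hp := hpx ▸ dp_self_pos hxne
      have h5 := mul_pos hα0 hp
      linarith only [bα, hqx0, h5]
    have hyne : y ≠ 0 := by
      rcases hxy with h | h
      · exact absurd hx0 h
      · exact h
    have hpypos : 0 < py := hpy ▸ dp_self_pos hyne
    have hFy0 : F *ᵥ y = 0 := by
      have h := e1
      rw [hx0] at h
      simpa using h
    have hσ₁0 : σ₁ = 0 := by
      have hgy0 : gy = 0 := by rw [hgy, hFy0]; simp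
      have hs : σ₁ ^ 2 ≤ 0 := by
        have h7 : σ₁ ^ 2 * py ≤ 0 * py := by linarith only [bσ₁, hgy0]
        exact le_of_mul_le_mul_right h7 hpypos |>.trans_eq rfl
      have h0 : σ₁ ^ 2 = 0 := le_antisymm hs (sq_nonneg _)
      exact pow_eq_zero_iff (two_ne_zero) |>.mp h0
    rw [hσ₁0]
    exact ⟨(aux_zero_mem α β σ₂ hα0 hβ0).1, (aux_zero_mem α β σ₂ hα0 hβ0).2⟩
  · -- positive eigenvalue: right interval
    right
    have hxne : x ≠ 0 := by
      intro hx0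
      rcases hxy with h | h
      · exact h hx0
      · apply h
        have h' : lam • y = 0 := by rw [← e2, hx0, Matrix.mulVec_zero]
        rcases smul_eq_zero.mp h' with h'' | h''
        · exact absurd h'' hposl.ne'
        · exact h''
    have hpxpos : 0 < px := hpx ▸ dp_self_pos hxne
    exact ⟨aux_pos_lower α lam px py qx hposl hpxpos hpy0 bα hq,
      key_sqrt_le2 β (σ₂ ^ 2) lam
        (aux_quad_pos β σ₂ lam px py qx tw hposl hpxpos bβ hq hww bσw)⟩
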